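/- The function b : [0,T] → ℝ solving the Riccati ODE -b'(t) = α₄ b(t) - (α₂/2) b(t)² - q/2 with b(T) = 0, where q = p/(1-p) < 0, α₂ = (1+q)β² + γ² > 0, α₄ = qβ - κ, exists on all of [0,T] and is bounded and nonnegative. -/

import Mathlib

open Set

/-- The Riccati ODE `-b'(t) = α₄ b(t) - (α₂/2) b(t)² - q/2`, `b(T) = 0`, with
`q = p/(1-p) < 0`, `α₂ = (1+q)β² + γ² > 0`, `α₄ = qβ - κ`, has a (normal
non-exploding) solution on all of `[0,T]` which is bounded and nonnegative. -/
theorem riccati_normal_solution (p q β γ κ T : ℝ) (hp : p < 0)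
    (hq : q = p / (1 - p)) (hκ : 0 < κ) (hT : 0 < T)
    (α₂ α₄ : ℝ) (hα₂ : α₂ = (1 + q) * β ^ 2 + γ ^ 2) (hα₂_pos : 0 < α₂)
    (hα₄ : α₄ = q * β - κ) :
    ∃ b : ℝ → ℝ, b T = 0 ∧
      (∀ t ∈ Icc (0 : ℝ) T,
        HasDerivAt b (-(α₄ * b t - α₂ / 2 * (b t) ^ 2 - q / 2)) t) ∧
      ∃ Cb : ℝ, ∀ t ∈ Icc (0 : ℝ) T, 0 ≤ b t ∧ b t ≤ Cb := by
  have hq0 : q < 0 := by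
    rw [hq]
    apply div_neg_of_neg_of_pos hp; linarith
  set δ : ℝ := Real.sqrt (α₄ ^ 2 - α₂ * q) with hδ
  have hD : 0 ≤ α₄ ^ 2 - α₂ * q := by nlinarith
  have hδ2 : δ ^ 2 = α₄ ^ 2 - α₂ * q := Real.sq_sqrt hD
  have habs : |α₄| < δ := by
    have : Real.sqrt (α₄ ^ 2) < δ := by
      apply Real.sqrt_lt_sqrt (sq_nonneg _); nlinarith
    simpa [Real.sqrt_sq_eq_abs] using this
  have hδm : 0 < δ - α₄ := by
    have := abs_lt.mp habs; linarith
  have hδp : 0 < δ + α₄ := by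
    have := abs_lt.mp habs; linarith
  have hδpos : 0 < δ := by linarith
  set E : ℝ → ℝ := fun t => Real.exp (δ * (T - t)) with hE
  set M : ℝ → ℝ := fun t => (δ - α₄) * E t + (δ + α₄) with hM
  have hEpos : ∀ t, 0 < E t := fun t => Real.exp_pos _
  have hMpos : ∀ t, 0 < M t := by
    intro t
    have := hEpos t
    simp only [hM]
    nlinarith
  refine ⟨fun t => (-q) * (E t - 1) / M t, ?_, ?_, ?_⟩
  · simp [hE, Real.exp_zero]
  · intro t ht
    have hMne : M t ≠ 0 := (hMpos t).ne'
    have hE' : HasDerivAt E (-δ * E t) t := by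
      have hinner : HasDerivAt (fun t : ℝ => δ * (T - t)) (-δ) t := by
        simpa using ((hasDerivAt_const t T).sub (hasDerivAt_id t)).const_mul δ
      simpa [hE, mul_comm] using hinner.exp
    have hN' : HasDerivAt (fun t => (-q) * (E t - 1)) ((-q) * (-δ * E t)) t :=
      (hE'.sub_const 1).const_mul (-q)
    have hM' : HasDerivAt M ((δ - α₄) * (-δ * E t)) t := by
      simpa [hM] using (hE'.const_mul (δ - α₄)).add_const (δ + α₄)
    have hdiv := hN'.div hM' hMne
    convert hdiv using 1
    case e'_4 => rfl
    case e'_5 => rfl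
    case e'_8 => rfl
    have hpoly : -(α₄ * ((-q) * (E t - 1)) * M t - α₂ / 2 * ((-q) * (E t - 1)) ^ 2
          - q / 2 * (M t) ^ 2)
        = (-q) * (-δ * E t) * M t - (-q) * (E t - 1) * ((δ - α₄) * (-δ * E t)) := by
      simp only [hM]
      linear_combination (q / 2) * (E t - 1) ^ 2 * hδ2
    rw [← hpoly]
    field_simp
  · refine ⟨(-q) / (δ - α₄), ?_⟩
    intro t ht
    have hE1 : 1 ≤ E t := by
      simp only [hE]
      have : 0 ≤ δ * (T - t) := mul_nonneg hδpos.le (by linarith [ht.2])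
      simpa using Real.one_le_exp this
    have hMt := hMpos t
    constructor
    · apply div_nonneg _ hMt.le
      nlinarith
    · have h1 : (-q) * (E t - 1) / M t ≤ (-q) * E t / ((δ - α₄) * E t) := by
        apply div_le_div₀ (by nlinarith [hEpos t]) (by nlinarith) (by positivity)
        simp only [hM]; nlinarith
      have h2 : (-q) * E t / ((δ - α₄) * E t) = (-q) / (δ - α₄) := by
        rw [mul_div_mul_right _ _ (hEpos t).ne']
      linarith [h1, h2 ▸ h1]
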